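/- Let n ≥ 2 and let Δ be a boomerang subgroup of SL_n(ℤ) that is not contained in the center {±I}. Then there exist a permutation σ of {1,…,n} with σ(1) ≠ 1, an element δ ∈ Δ, and invertible upper triangular matrices b₁, b₂ ∈ GL_n(ℚ) such that δ = b₁ · P_σ · b₂, where P_σ is the permutation matrix of σ (the matrix sending the j-th standard basis vector to the σ(j)-th). -/

import Mathlib

/-- The conjugation action of `γ` on subgroups: `Δ ↦ γ Δ γ⁻¹`. -/
def conjSubgroup {Γ : Type*} [Group Γ] (γ : Γ) (Δ : Subgroup Γ) : Subgroup Γ :=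
  Subgroup.map (MulAut.conj γ).toMonoidHom Δ

/-- The Chabauty topology on `Subgroup Γ`: induced from the product of discrete
topologies on `Γ → Prop` via the membership indicator. -/
def chabautyTopology (Γ : Type*) [Group Γ] : TopologicalSpace (Subgroup Γ) :=
  TopologicalSpace.induced (fun (Δ : Subgroup Γ) (g : Γ) => g ∈ Δ)
    (@Pi.topologicalSpace Γ (fun _ => Prop) (fun _ => ⊥))

/-- `γ` is a recurrent direction for `Δ`: every Chabauty-open neighbourhood `O` of `Δ`
contains `γ^n Δ γ^{-n}` for some `n ≥ 1`. -/
def IsRecurrentDirection {Γ : Type*} [Group Γ] (γ : Γ) (Δ : Subgroup Γ) : Prop :=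
  ∀ O : Set (Subgroup Γ), (chabautyTopology Γ).IsOpen O → Δ ∈ O →
    ∃ n : ℕ, 1 ≤ n ∧ conjSubgroup (γ ^ n) Δ ∈ O

/-- `Δ` is a boomerang subgroup if every `γ` is a recurrent direction for it. -/
def IsBoomerang {Γ : Type*} [Group Γ] (Δ : Subgroup Γ) : Prop :=
  ∀ γ : Γ, IsRecurrentDirection γ Δ

lemma isOpen_mem_chabauty {Γ : Type*} [Group Γ] (g : Γ) :
    (chabautyTopology Γ).IsOpen {Δ' : Subgroup Γ | g ∈ Δ'} := by
  letI tP : TopologicalSpace Prop := ⊥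
  haveI : DiscreteTopology Prop := ⟨rfl⟩
  exact ⟨(fun f : Γ → Prop => f g) ⁻¹' {p | p},
    (continuous_apply g).isOpen_preimage _ (isOpen_discrete _), rfl⟩

lemma boomerang_ret {Γ : Type*} [Group Γ] {Δ : Subgroup Γ} (h : IsBoomerang Δ) (γ : Γ)
    {d : Γ} (hd : d ∈ Δ) : ∃ m : ℕ, 1 ≤ m ∧ (γ ^ m)⁻¹ * d * γ ^ m ∈ Δ := by
  obtain ⟨m, hm, hmem⟩ := h γ _ (isOpen_mem_chabauty d) hd
  obtain ⟨x, hx, hxe⟩ := hmem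
  refine ⟨m, hm, ?_⟩
  have : x = (γ ^ m)⁻¹ * d * γ ^ m := by
    have : γ ^ m * x * (γ ^ m)⁻¹ = d := hxe
    group
    rw [← this]
    group
  rwa [← this]

lemma transvection_pow {R : Type*} [CommRing R] {n : ℕ} {i j : Fin n} (hij : i ≠ j)
    (c : R) (m : ℕ) :
    (Matrix.transvection i j c) ^ m = Matrix.transvection i j ((m : R) * c) := by
  induction m with
  | zero => simp [Matrix.transvection_zero]
  | succ m ih =>
      rw [pow_succ, ih, Matrix.transvection_mul_transvection_same i j hij]
      congr 1
      push_cast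
      ring

lemma part_b {n : ℕ} (hn : 2 ≤ n) (z : Fin n)
    (Δ : Subgroup (Matrix.SpecialLinearGroup (Fin n) ℤ)) (hΔ : IsBoomerang Δ)
    (hnc : ¬ ∀ δ ∈ Δ, (δ : Matrix (Fin n) (Fin n) ℤ) = 1 ∨
      (δ : Matrix (Fin n) (Fin n) ℤ) = -1) :
    ∃ δ ∈ Δ, ∃ i : Fin n, i ≠ z ∧ (δ : Matrix (Fin n) (Fin n) ℤ) i z ≠ 0 := by
  by_contra hcon
  push_neg at hcon
  -- every element of Δ has (z-)column a multiple of e_z, with unit diagonal entry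
  have hunit : ∀ δ ∈ Δ, (δ : Matrix (Fin n) (Fin n) ℤ) z z = 1 ∨
      (δ : Matrix (Fin n) (Fin n) ℤ) z z = -1 := by
    intro δ hδ
    have h2 : ((δ⁻¹ : Matrix.SpecialLinearGroup (Fin n) ℤ) : Matrix (Fin n) (Fin n) ℤ) *
        (δ : Matrix (Fin n) (Fin n) ℤ) = 1 := by
      rw [← Matrix.SpecialLinearGroup.coe_mul, inv_mul_cancel,
        Matrix.SpecialLinearGroup.coe_one]
    have h3 := congrFun (congrFun h2 z) z
    rw [Matrix.mul_apply, Finset.sum_eq_single z] at h3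
    · have : (1 : Matrix (Fin n) (Fin n) ℤ) z z = 1 := Matrix.one_apply_eq z
      rw [this] at h3
      exact Int.isUnit_iff.mp (IsUnit.of_mul_eq_one _ (by rw [mul_comm]; exact h3))
    · intro b _ hb
      rw [hcon δ hδ b hb, mul_zero]
    · simp
  push_neg at hnc
  obtain ⟨δ₀, hδ₀Δ, hδ₀1, hδ₀2⟩ := hnc
  set A := (δ₀ : Matrix (Fin n) (Fin n) ℤ) with hA
  set ε := A z z with hε
  have hεu : ε = 1 ∨ ε = -1 := hunit δ₀ hδ₀Δ
  have hAz : ∀ a : Fin n, a ≠ z → A a z = 0 := fun a ha => hcon δ₀ hδ₀Δ a ha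
  have hcolj : ∀ j : Fin n, j ≠ z → ∀ a : Fin n, A a j = if a = j then ε else 0 := by
    intro j hj
    set γmat := Matrix.transvection j z (3 : ℤ) with hγmat
    have hγdet : γmat.det = 1 := Matrix.det_transvection_of_ne j z hj 3
    set γ : Matrix.SpecialLinearGroup (Fin n) ℤ := ⟨γmat, hγdet⟩ with hγ
    obtain ⟨m, hm, hmem⟩ := boomerang_ret hΔ γ hδ₀Δ
    set δ' := (γ ^ m)⁻¹ * δ₀ * γ ^ m with hδ'
    set B := (δ' : Matrix (Fin n) (Fin n) ℤ) with hB
    have hgrp : δ₀ * γ ^ m = γ ^ m * δ' := by rw [hδ']; group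
    set c : ℤ := (m : ℤ) * 3 with hc
    have hc3 : 3 ≤ c := by
      have : (1 : ℤ) ≤ (m : ℤ) := by exact_mod_cast hm
      nlinarith
    have hc0 : c ≠ 0 := by omega
    have hγm : ((γ ^ m : Matrix.SpecialLinearGroup (Fin n) ℤ) : Matrix (Fin n) (Fin n) ℤ)
        = 1 + Matrix.single j z c := by
      rw [Matrix.SpecialLinearGroup.coe_pow]
      show γmat ^ m = _
      rw [hγmat, transvection_pow hj, Matrix.transvection]
    have heq : A * (1 + Matrix.single j z c)
        = (1 + Matrix.single j z c) * B := by
      rw [← hγm, hA, hB, ← Matrix.SpecialLinearGroup.coe_mul,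
        ← Matrix.SpecialLinearGroup.coe_mul, hgrp]
    have hBz : ∀ a : Fin n, a ≠ z → B a z = 0 := fun a ha => hcon δ' hmem a ha
    set ε' := B z z with hε'
    have hε'u : ε' = 1 ∨ ε' = -1 := hunit δ' hmem
    have hent : ∀ a : Fin n, A a z + A a j * c
        = B a z + (Matrix.single j z c * B) a z := by
      intro a
      have := congrFun (congrFun heq a) z
      rw [Matrix.mul_add, Matrix.add_mul, Matrix.mul_one, Matrix.one_mul,
        Matrix.add_apply, Matrix.add_apply,
        Matrix.mul_single_apply_same] at this
      exact this
    -- a = j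
    have e2 : A j j = ε' := by
      have := hent j
      rw [hAz j hj, hBz j hj, Matrix.single_mul_apply_same] at this
      simp only [zero_add] at this
      rw [mul_comm] at this
      exact mul_left_cancel₀ hc0 this
    -- a = z
    have e1 : A z j * c = ε' - ε := by
      have := hent z
      rw [Matrix.single_mul_apply_of_ne _ _ _ _ _ (Ne.symm hj)] at this
      rw [← hε, ← hε'] at this
      linarith [this]
    -- a ∉ {z, j}
    have e3 : ∀ a : Fin n, a ≠ z → a ≠ j → A a j = 0 := by
      intro a haz haj
      have := hent a
      rw [hAz a haz, hBz a haz,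
        Matrix.single_mul_apply_of_ne _ _ _ _ _ haj] at this
      simp only [zero_add, add_zero] at this
      exact (mul_eq_zero.mp this).resolve_right hc0
    have hzj0 : A z j = 0 ∧ ε' = ε := by
      have hd : c ∣ ε' - ε := Dvd.intro_left _ e1
      rcases hεu with h1 | h1 <;> rcases hε'u with h2 | h2 <;> rw [h1, h2] at hd ⊢
      · refine ⟨?_, rfl⟩
        have : A z j * c = 0 := by rw [e1, h1, h2]; ring
        exact (mul_eq_zero.mp this).resolve_right hc0
      · exfalso; rw [show (-1 : ℤ) - 1 = -2 by ring] at hd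
        have := Int.le_of_dvd (by norm_num) (dvd_neg.mp hd)
        omega
      · exfalso; rw [show (1 : ℤ) - -1 = 2 by ring] at hd
        have := Int.le_of_dvd (by norm_num) hd
        omega
      · refine ⟨?_, rfl⟩
        have : A z j * c = 0 := by rw [e1, h1, h2]; ring
        exact (mul_eq_zero.mp this).resolve_right hc0
    intro a
    by_cases haj : a = j
    · rw [if_pos haj, haj, e2, hzj0.2]
    · rw [if_neg haj]
      by_cases haz : a = z
      · rw [haz]; exact hzj0.1
      · exact e3 a haz haj
  -- now δ₀ = ε • 1
  have hAfull : ∀ a b : Fin n, A a b = if a = b then ε else 0 := by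
    intro a b
    by_cases hb : b = z
    · subst hb
      by_cases ha : a = b
      · rw [if_pos ha, ha, ← hε]
      · rw [if_neg ha]; exact hAz a ha
    · exact hcolj b hb a
  rcases hεu with h | h
  · apply hδ₀1
    ext a b
    rw [hAfull a b, Matrix.one_apply, h]
  · apply hδ₀2
    ext a b
    rw [hAfull a b, Matrix.neg_apply, Matrix.one_apply, h]
    split_ifs <;> simp

lemma diag_ne_zero_of_triangular {n : ℕ} {u : Matrix (Fin n) (Fin n) ℚ}
    (hu : u.BlockTriangular id) (hdet : IsUnit u.det) (i : Fin n) : u i i ≠ 0 := by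
  intro h
  rw [Matrix.det_of_upperTriangular hu] at hdet
  exact (isUnit_iff_ne_zero.mp hdet) (Finset.prod_eq_zero (Finset.mem_univ i) h)

lemma bruhat_elimination {n : ℕ} (hn : 0 < n) (M : Matrix (Fin n) (Fin n) ℚ)
    (hM : IsUnit M.det) :
    ∀ k : ℕ, k ≤ n →
    ∃ (u₁ u₂ : Matrix (Fin n) (Fin n) ℚ) (f : Fin n → Fin n),
      u₁.BlockTriangular id ∧ u₂.BlockTriangular id ∧ IsUnit u₁.det ∧ IsUnit u₂.det ∧
      (∀ j j' : Fin n, (j : ℕ) < k → (j' : ℕ) < k → f j = f j' → j = j') ∧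
      (∀ j : Fin n, (j : ℕ) < k →
        (u₁ * M * u₂) (f j) j ≠ 0 ∧ ∀ i, i ≠ f j → (u₁ * M * u₂) i j = 0) ∧
      (1 ≤ k → ∀ r : Fin n, f ⟨0, hn⟩ < r → M r ⟨0, hn⟩ = 0) := by
  intro k
  induction k with
  | zero =>
      intro _
      exact ⟨1, 1, id, Matrix.blockTriangular_one, Matrix.blockTriangular_one,
        by simp, by simp, fun j j' hj => absurd hj (Nat.not_lt_zero _),
        fun j hj => absurd hj (Nat.not_lt_zero _), fun h => absurd h (by omega)⟩
  | succ k ih =>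
      intro hk1
      obtain ⟨u₁, u₂, f, ht₁, ht₂, hd₁, hd₂, hinj, hcols, hpiv⟩ := ih (Nat.le_of_succ_le hk1)
      set N := u₁ * M * u₂ with hNdef
      have hkn : k < n := hk1
      set k' : Fin n := ⟨k, hkn⟩ with hk'
      -- the column operation
      set q : Fin n → ℚ :=
        fun a => if (a : ℕ) < k then -(N (f a) k') / (N (f a) a) else 0 with hq
      have hqk : ∀ a : Fin n, ¬ (a : ℕ) < k → q a = 0 := fun a h => if_neg h
      set v : Matrix (Fin n) (Fin n) ℚ :=
        1 + Matrix.of (fun a b => if b = k' then q a else 0) with hv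
      have hvt : v.BlockTriangular id := by
        intro i j hij
        have hij' : j < i := hij
        simp only [hv, Matrix.add_apply, Matrix.of_apply,
          Matrix.one_apply_ne (ne_of_gt hij')]
        rw [zero_add]
        split_ifs with hb
        · apply hqk
          intro h
          rw [hb] at hij'
          have h2 : (k : ℕ) < (i : ℕ) := hij'
          omega
        · rfl
      have hvd : ∀ a, v a a = 1 := by
        intro a
        simp only [hv, Matrix.add_apply, Matrix.one_apply_eq, Matrix.of_apply]
        split_ifs with hb
        · rw [hqk a (by rw [hb]; exact lt_irrefl k), add_zero]
        · rw [add_zero]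
      have hvdet : IsUnit v.det := by
        rw [Matrix.det_of_upperTriangular hvt]
        simp [hvd]
      set N₁ := N * v with hN₁
      have hN₁app : ∀ i b, N₁ i b = N i b + (if b = k' then ∑ a, N i a * q a else 0) := by
        intro i b
        rw [hN₁, hv, Matrix.mul_add, Matrix.mul_one, Matrix.add_apply, Matrix.mul_apply]
        congr 1
        by_cases hb : b = k'
        · simp only [Matrix.of_apply, hb, if_true]
        · simp only [Matrix.of_apply, hb, if_false]
          exact Finset.sum_eq_zero fun a _ => mul_zero _
      have hN₁f : ∀ j : Fin n, (j : ℕ) < k → N₁ (f j) k' = 0 := by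
        intro j hj
        rw [hN₁app, if_pos rfl, Finset.sum_eq_single j]
        · rw [hq]
          simp only [hj, if_true]
          rw [mul_comm, div_mul_cancel₀ _ (hcols j hj).1]
          ring
        · intro a _ haj
          by_cases hak : (a : ℕ) < k
          · rw [(hcols a hak).2 (f j) (fun he => haj (hinj j a hj hak he).symm),
              zero_mul]
          · rw [hqk a hak, mul_zero]
        · simp
      have hN₁nf : ∀ i : Fin n, (∀ j : Fin n, (j : ℕ) < k → i ≠ f j) → N₁ i k' = N i k' := by
        intro i hi
        rw [hN₁app, if_pos rfl, Finset.sum_eq_zero, add_zero]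
        intro a _
        by_cases hak : (a : ℕ) < k
        · rw [(hcols a hak).2 i (hi a hak), zero_mul]
        · rw [hqk a hak, mul_zero]
      have hN₁other : ∀ i b, b ≠ k' → N₁ i b = N i b := fun i b hb => by
        rw [hN₁app, if_neg hb, add_zero]
      have hdetN₁ : IsUnit N₁.det := by
        rw [hN₁, hNdef]
        simp only [Matrix.det_mul]
        exact ((hd₁.mul hM).mul hd₂).mul hvdet
      -- the pivot
      have hTex : ∃ i, N₁ i k' ≠ 0 := by
        by_contra h
        push_neg at h
        rw [Matrix.det_eq_zero_of_column_eq_zero k' h] at hdetN₁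
        exact (isUnit_iff_ne_zero.mp hdetN₁) rfl
      set T : Finset (Fin n) := Finset.univ.filter (fun i => N₁ i k' ≠ 0) with hT
      have hTne : T.Nonempty := ⟨hTex.choose, by simp [hT, hTex.choose_spec]⟩
      set p := T.max' hTne with hp
      have hpmem : N₁ p k' ≠ 0 := by
        have := T.max'_mem hTne
        simp only [hT, Finset.mem_filter] at this
        exact this.2
      have hpmax : ∀ i, p < i → N₁ i k' = 0 := by
        intro i hi
        by_contra h
        exact absurd (T.le_max' i (by simp [hT, h])) (not_le.mpr hi)
      have hpnew : ∀ j : Fin n, (j : ℕ) < k → p ≠ f j := fun j hj he =>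
        hpmem (by rw [he]; exact hN₁f j hj)
      -- the row operation
      set w : Matrix (Fin n) (Fin n) ℚ :=
        1 + Matrix.of (fun a b => if b = p ∧ a < p then -(N₁ a k') / (N₁ p k') else 0)
        with hw
      have hwt : w.BlockTriangular id := by
        intro i j hij
        have hij' : j < i := hij
        simp only [hw, Matrix.add_apply, Matrix.of_apply,
          Matrix.one_apply_ne (ne_of_gt hij')]
        rw [zero_add, if_neg]
        rintro ⟨rfl, hip⟩
        exact absurd (lt_trans hij' hip) (lt_irrefl _)
      have hwd : ∀ a, w a a = 1 := by
        intro a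
        simp only [hw, Matrix.add_apply, Matrix.one_apply_eq, Matrix.of_apply]
        rw [if_neg, add_zero]
        rintro ⟨rfl, hap⟩
        exact absurd hap (lt_irrefl _)
      have hwdet : IsUnit w.det := by
        rw [Matrix.det_of_upperTriangular hwt]
        simp [hwd]
      set N₂ := w * N₁ with hN₂
      have hN₂app : ∀ i j, N₂ i j
          = N₁ i j + (if i < p then (-(N₁ i k') / (N₁ p k')) * N₁ p j else 0) := by
        intro i j
        rw [hN₂, hw, Matrix.add_mul, Matrix.one_mul, Matrix.add_apply, Matrix.mul_apply]
        congr 1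
        rw [Finset.sum_eq_single p]
        · simp only [Matrix.of_apply, true_and]
          split_ifs <;> simp
        · intro a _ hap
          simp only [Matrix.of_apply]
          rw [if_neg (fun hh => hap hh.1), zero_mul]
        · simp
      have hN₂old : ∀ (i j : Fin n), (j : ℕ) < k → N₂ i j = N i j := by
        intro i j hj
        have hjk' : j ≠ k' := by
          intro he
          rw [he] at hj
          exact absurd hj (by simp [hk'])
        rw [hN₂app, hN₁other i j hjk', hN₁other p j hjk',
          (hcols j hj).2 p (hpnew j hj)]
        simp
      have hN₂k' : ∀ i, i ≠ p → N₂ i k' = 0 := by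
        intro i hip
        rw [hN₂app]
        rcases lt_or_gt_of_ne hip with h | h
        · rw [if_pos h, div_mul_cancel₀ _ hpmem]
          ring
        · rw [if_neg (not_lt.mpr h.le), hpmax i h, add_zero]
      have hN₂pk' : N₂ p k' = N₁ p k' := by
        rw [hN₂app, if_neg (lt_irrefl p), add_zero]
      have hassoc : (w * u₁) * M * (u₂ * v) = N₂ := by
        rw [hN₂, hN₁, hNdef]
        simp only [Matrix.mul_assoc]
      refine ⟨w * u₁, u₂ * v, Function.update f k' p, hwt.mul ht₁, ht₂.mul hvt,
        ?_, ?_, ?_, ?_, ?_⟩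
      · rw [Matrix.det_mul]; exact hwdet.mul hd₁
      · rw [Matrix.det_mul]; exact hd₂.mul hvdet
      · -- injectivity
        intro j j' hj hj' he
        rw [Function.update_apply, Function.update_apply] at he
        by_cases h1 : j = k' <;> by_cases h2 : j' = k'
        · rw [h1, h2]
        · rw [if_pos h1, if_neg h2] at he
          have hj'k : (j' : ℕ) < k := by
            rcases Nat.lt_succ_iff_lt_or_eq.mp hj' with h | h
            · exact h
            · exact absurd (Fin.ext h : j' = k') h2
          exact absurd he (hpnew j' hj'k)
        · rw [if_neg h1, if_pos h2] at he
          have hjk : (j : ℕ) < k := by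
            rcases Nat.lt_succ_iff_lt_or_eq.mp hj with h | h
            · exact h
            · exact absurd (Fin.ext h : j = k') h1
          exact absurd he.symm (hpnew j hjk)
        · rw [if_neg h1, if_neg h2] at he
          have hjk : (j : ℕ) < k := by
            rcases Nat.lt_succ_iff_lt_or_eq.mp hj with h | h
            · exact h
            · exact absurd (Fin.ext h : j = k') h1
          have hj'k : (j' : ℕ) < k := by
            rcases Nat.lt_succ_iff_lt_or_eq.mp hj' with h | h
            · exact h
            · exact absurd (Fin.ext h : j' = k') h2
          exact hinj j j' hjk hj'k he
      · -- columns
        intro j hj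
        rw [hassoc]
        by_cases h1 : j = k'
        · subst h1
          rw [Function.update_self]
          constructor
          · rw [hN₂pk']; exact hpmem
          · exact hN₂k'
        · have hjk : (j : ℕ) < k := by
            rcases Nat.lt_succ_iff_lt_or_eq.mp hj with h | h
            · exact h
            · exact absurd (Fin.ext h : j = k') h1
          rw [Function.update_of_ne h1]
          constructor
          · rw [hN₂old _ _ hjk]; exact (hcols j hjk).1
          · intro i hi
            rw [hN₂old _ _ hjk]
            exact (hcols j hjk).2 i hi
      · -- pivot condition for column 0
        intro _ r hr
        by_cases hk0 : 1 ≤ k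
        · have hzk' : (⟨0, hn⟩ : Fin n) ≠ k' := by
            intro he
            have := congrArg Fin.val he
            simp only [hk'] at this
            omega
          rw [Function.update_of_ne hzk'] at hr
          exact hpiv hk0 r hr
        · -- k = 0 : the pivot is the bottom-most nonzero entry of column 0 of M
          have hk0' : k = 0 := by omega
          have hzk' : (⟨0, hn⟩ : Fin n) = k' := by
            apply Fin.ext
            simp [hk', hk0']
          rw [hzk'] at hr ⊢
          rw [Function.update_self] at hr
          -- column k' of N₁ agrees with that of N
          have hcolN : ∀ i, N₁ i k' = N i k' :=
            fun i => hN₁nf i (fun j hj => absurd hj (by omega))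
          -- column k' of N in terms of column k' of M
          have hu₂z : ∀ b : Fin n, b ≠ k' → u₂ b k' = 0 := by
            intro b hb
            have hbv : (b : ℕ) ≠ (k' : ℕ) := fun h => hb (Fin.ext h)
            have hkv : ((k' : Fin n) : ℕ) = k := rfl
            have hlt : (k' : Fin n) < b := by
              rw [Fin.lt_def]
              omega
            exact ht₂ hlt
          have hNz : ∀ i, N i k' = (∑ a, u₁ i a * M a k') * u₂ k' k' := by
            intro i
            rw [hNdef, Matrix.mul_apply, Finset.sum_eq_single k']
            · rw [Matrix.mul_apply]
            · intro b _ hb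
              rw [hu₂z b hb, mul_zero]
            · simp
          have hu₁d : ∀ i, u₁ i i ≠ 0 := diag_ne_zero_of_triangular ht₁ hd₁
          have hu₂d : ∀ i, u₂ i i ≠ 0 := diag_ne_zero_of_triangular ht₂ hd₂
          have hMex : ∃ i, M i k' ≠ 0 := by
            by_contra h
            push_neg at h
            rw [Matrix.det_eq_zero_of_column_eq_zero k' h] at hM
            exact (isUnit_iff_ne_zero.mp hM) rfl
          set T' : Finset (Fin n) := Finset.univ.filter (fun i => M i k' ≠ 0) with hT'
          have hT'ne : T'.Nonempty := ⟨hMex.choose, by simp [hT', hMex.choose_spec]⟩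
          set t := T'.max' hT'ne with htd
          have htmem : M t k' ≠ 0 := by
            have := T'.max'_mem hT'ne
            simp only [hT', Finset.mem_filter] at this
            exact this.2
          have htmax : ∀ i, t < i → M i k' = 0 := by
            intro i hi
            by_contra h
            exact absurd (T'.le_max' i (by simp [hT', h])) (not_le.mpr hi)
          have hNt : N t k' ≠ 0 := by
            rw [hNz]
            apply mul_ne_zero _ (hu₂d k')
            rw [Finset.sum_eq_single t]
            · exact mul_ne_zero (hu₁d t) htmem
            · intro a _ hat
              rcases lt_or_gt_of_ne hat with h | h
              · have h0 : u₁ t a = 0 := ht₁ h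
                rw [h0, zero_mul]
              · rw [htmax a h, mul_zero]
            · simp
          have hNgt : ∀ i, t < i → N i k' = 0 := by
            intro i hi
            rw [hNz]
            rw [Finset.sum_eq_zero, zero_mul]
            intro a _
            rcases lt_or_ge a i with h | h
            · have h0 : u₁ i a = 0 := ht₁ h
              rw [h0, zero_mul]
            · rw [htmax a (lt_of_lt_of_le hi h), mul_zero]
          have hpt : p = t := by
            apply le_antisymm
            · by_contra h
              push_neg at h
              exact hpmem (by rw [hcolN]; exact hNgt p h)
            · exact T.le_max' t (by simp [hT]; rw [hcolN]; exact hNt)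
          rw [hpt] at hr
          exact htmax r hr

theorem boomerang_meets_bruhat_cell_moving_one {n : ℕ} (hn : 2 ≤ n)
    (Δ : Subgroup (Matrix.SpecialLinearGroup (Fin n) ℤ)) (hΔ : IsBoomerang Δ)
    (hnc : ¬ ∀ δ ∈ Δ, (δ : Matrix (Fin n) (Fin n) ℤ) = 1 ∨
      (δ : Matrix (Fin n) (Fin n) ℤ) = -1) :
    ∃ σ : Equiv.Perm (Fin n), σ ⟨0, by omega⟩ ≠ ⟨0, by omega⟩ ∧
      ∃ δ ∈ Δ, ∃ b₁ b₂ : Matrix (Fin n) (Fin n) ℚ,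
        IsUnit b₁ ∧ IsUnit b₂ ∧
        b₁.BlockTriangular id ∧ b₂.BlockTriangular id ∧
        ((δ : Matrix (Fin n) (Fin n) ℤ)).map (Int.cast : ℤ → ℚ) =
          b₁ * (Matrix.of fun i j : Fin n => if i = σ j then (1 : ℚ) else 0) * b₂ := by
  have hn0 : 0 < n := by omega
  set z : Fin n := ⟨0, hn0⟩ with hz
  obtain ⟨δ, hδΔ, i, hiz, hi⟩ := part_b hn z Δ hΔ hnc
  set M : Matrix (Fin n) (Fin n) ℚ :=
    ((δ : Matrix (Fin n) (Fin n) ℤ)).map (Int.cast : ℤ → ℚ) with hMdef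
  have hMd : IsUnit M.det := by
    have h2 : M = (Int.castRingHom ℚ).mapMatrix (δ : Matrix (Fin n) (Fin n) ℤ) := rfl
    have h3 := (Int.castRingHom ℚ).map_det (δ : Matrix (Fin n) (Fin n) ℤ)
    rw [Matrix.SpecialLinearGroup.det_coe] at h3
    rw [h2, ← h3]
    simp
  obtain ⟨u₁, u₂, f, ht₁, ht₂, hd₁, hd₂, hinj, hcols, hpiv⟩ :=
    bruhat_elimination hn0 M hMd n (le_refl n)
  have hfinj : Function.Injective f := fun j j' he => hinj j j' j.isLt j'.isLt he
  have hfbij : Function.Bijective f := Finite.injective_iff_bijective.mp hfinj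
  set σ : Equiv.Perm (Fin n) := Equiv.ofBijective f hfbij with hσ
  have hσap : ∀ j, σ j = f j := fun j => rfl
  have hMiz : M i z ≠ 0 := by
    rw [hMdef]
    simp only [Matrix.map_apply]
    exact_mod_cast hi
  have hσz : σ z ≠ z := by
    rw [hσap]
    intro he
    have h1 : ¬ f z < i := fun h => hMiz (hpiv (by omega) i h)
    have h2 : i ≤ f z := not_lt.mp h1
    have h3 : z < i := by
      rw [Fin.lt_def]
      have : (i : ℕ) ≠ (z : ℕ) := fun h => hiz (Fin.ext h)
      have hzv : (z : ℕ) = 0 := rfl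
      omega
    rw [he] at h2
    exact absurd (lt_of_lt_of_le h3 h2) (lt_irrefl z)
  set N := u₁ * M * u₂ with hNdef
  set P : Matrix (Fin n) (Fin n) ℚ :=
    Matrix.of fun i j : Fin n => if i = σ j then (1 : ℚ) else 0 with hP
  set D : Matrix (Fin n) (Fin n) ℚ :=
    Matrix.diagonal (fun i => N (f (σ.symm i)) (σ.symm i)) with hD
  have hDP : N = D * P := by
    ext a b
    rw [hD, Matrix.diagonal_mul]
    rw [hP]
    simp only [Matrix.of_apply]
    by_cases hab : a = σ b
    · rw [if_pos hab, mul_one, hab]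
      have : σ.symm (σ b) = b := Equiv.symm_apply_apply σ b
      rw [this, ← hσap]
    · rw [if_neg hab, mul_zero]
      exact (hcols b b.isLt).2 a (fun h => hab (by rw [h, hσap]))
  have hDdet : IsUnit D.det := by
    rw [hD, Matrix.det_diagonal]
    rw [isUnit_iff_ne_zero]
    exact Finset.prod_ne_zero_iff.mpr fun a _ => (hcols (σ.symm a) (σ.symm a).isLt).1
  refine ⟨σ, hσz, δ, hδΔ, u₁⁻¹ * D, u₂⁻¹, ?_, ?_, ?_, ?_, ?_⟩
  · exact (Matrix.isUnit_nonsing_inv_iff.mpr ((Matrix.isUnit_iff_isUnit_det _).mpr hd₁)).mul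
      ((Matrix.isUnit_iff_isUnit_det _).mpr hDdet)
  · exact Matrix.isUnit_nonsing_inv_iff.mpr ((Matrix.isUnit_iff_isUnit_det _).mpr hd₂)
  · haveI := u₁.invertibleOfIsUnitDet hd₁
    exact (Matrix.blockTriangular_inv_of_blockTriangular ht₁).mul
      (Matrix.blockTriangular_diagonal _)
  · haveI := u₂.invertibleOfIsUnitDet hd₂
    exact Matrix.blockTriangular_inv_of_blockTriangular ht₂
  · show M = u₁⁻¹ * D * P * u₂⁻¹
    have h1 : u₁⁻¹ * D * P * u₂⁻¹ = u₁⁻¹ * (u₁ * M * u₂) * u₂⁻¹ := by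
      rw [hNdef] at hDP
      rw [Matrix.mul_assoc (u₁⁻¹), ← hDP]
    rw [h1, Matrix.mul_assoc u₁ M u₂, ← Matrix.mul_assoc u₁⁻¹,
      Matrix.nonsing_inv_mul _ hd₁, Matrix.one_mul, Matrix.mul_assoc,
      Matrix.mul_nonsing_inv _ hd₂, Matrix.mul_one]
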